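/- For independent standard Gumbel variables ε(x), x ∈ X (X finite), and energies E : X → ℝ, the random variable argmax_x(-E(x) + ε(x)) and the random value max_x(-E(x) + ε(x)) are independent. -/

import Mathlib

open MeasureTheory ProbabilityTheory Real Set Filter Topology

lemma gmb_hasDerivAt (K t : ℝ) :
    HasDerivAt (fun u => Real.exp (-K * Real.exp (-u)))
      (K * Real.exp (-t - K * Real.exp (-t))) t := by
  have h1 : HasDerivAt (fun u : ℝ => -K * Real.exp (-u)) (K * Real.exp (-t)) t := by
    have h0 : HasDerivAt (fun u : ℝ => Real.exp (-u)) (-Real.exp (-t)) t := by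
      simpa using (hasDerivAt_neg t).exp
    simpa [mul_comm, mul_left_comm, mul_assoc, neg_mul] using h0.const_mul (-K)
  have h2 := h1.exp
  convert h2 using 1
  rw [show -t - K * Real.exp (-t) = (-K * Real.exp (-t)) + (-t) by ring, Real.exp_add]
  ring

lemma gmb_tendsto_atBot (K : ℝ) (hK : 0 < K) :
    Tendsto (fun u => Real.exp (-K * Real.exp (-u))) atBot (nhds 0) := by
  have h1 : Tendsto (fun u : ℝ => Real.exp (-u)) atBot atTop :=
    Real.tendsto_exp_atTop.comp tendsto_neg_atBot_atTop
  have h2 : Tendsto (fun u : ℝ => K * Real.exp (-u)) atBot atTop :=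
    h1.const_mul_atTop hK
  have h3 : Tendsto (fun u : ℝ => -(K * Real.exp (-u))) atBot atBot :=
    tendsto_neg_atTop_atBot.comp h2
  exact Real.tendsto_exp_atBot.comp (by simpa [neg_mul] using h3)

lemma gmb_cont (K : ℝ) : Continuous (fun u : ℝ => Real.exp (-u - K * Real.exp (-u))) := by
  fun_prop

lemma gmb_nonneg (K u : ℝ) : 0 ≤ Real.exp (-u - K * Real.exp (-u)) := (Real.exp_pos _).le

lemma gmb_integrableOn (K : ℝ) (hK : 0 < K) (t : ℝ) :
    IntegrableOn (fun u => Real.exp (-u - K * Real.exp (-u))) (Iic t) := by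
  have key : ∀ a b : ℝ, a ≤ b → (∫ u in a..b, Real.exp (-u - K * Real.exp (-u)))
      = (1/K) * Real.exp (-K * Real.exp (-b)) - (1/K) * Real.exp (-K * Real.exp (-a)) := by
    intro a b hab
    have := intervalIntegral.integral_eq_sub_of_hasDerivAt
      (f := fun u => (1/K) * Real.exp (-K * Real.exp (-u)))
      (f' := fun u => Real.exp (-u - K * Real.exp (-u)))
      (a := a) (b := b) (fun x _ => by
        have := (gmb_hasDerivAt K x).const_mul (1/K)
        convert this using 1
        · rfl
        · rw [← mul_assoc, one_div_mul_cancel hK.ne', one_mul])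
      (by exact ((gmb_cont K).intervalIntegrable a b))
    simpa using this
  have hInt : ∀ n : ℕ, IntegrableOn (fun u => Real.exp (-u - K * Real.exp (-u))) (Ioc (t - n) t) := by
    intro n
    exact ((gmb_cont K).integrableOn_Icc (a := t - n) (b := t)).mono_set Ioc_subset_Icc_self
  have hTend : Tendsto (fun n : ℕ => t - n) atTop atBot := by
    apply tendsto_atBot_add_const_left
    exact tendsto_neg_atTop_atBot.comp tendsto_natCast_atTop_atTop
  refine integrableOn_Iic_of_intervalIntegral_norm_bounded (1/K) t hInt hTend ?_
  filter_upwards with n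
  have hle : t - (n:ℝ) ≤ t := by simp
  rw [show (fun x => ‖Real.exp (-x - K * Real.exp (-x))‖) = fun x => Real.exp (-x - K * Real.exp (-x)) by
    funext x; exact Real.norm_of_nonneg (gmb_nonneg K x)]
  rw [key _ _ hle]
  have h1 : Real.exp (-K * Real.exp (-t)) ≤ 1 := by
    apply Real.exp_le_one_iff.mpr
    have : 0 ≤ K * Real.exp (-t) := le_of_lt (mul_pos hK (Real.exp_pos _))
    linarith
  have h2 : 0 ≤ (1/K) * Real.exp (-K * Real.exp (-(t - n))) :=
    mul_nonneg (by positivity) (Real.exp_pos _).le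
  have h3 : (1/K) * Real.exp (-K * Real.exp (-t)) ≤ 1/K := by
    rw [mul_comm]
    calc Real.exp (-K * Real.exp (-t)) * (1/K) ≤ 1 * (1/K) := by
          apply mul_le_mul_of_nonneg_right h1 (by positivity)
      _ = 1/K := one_mul _
  linarith

lemma gmb_integral_Iic (K : ℝ) (hK : 0 < K) (t : ℝ) :
    ∫ u in Iic t, Real.exp (-u - K * Real.exp (-u))
      = (1/K) * Real.exp (-K * Real.exp (-t)) := by
  have h := integral_Iic_of_hasDerivAt_of_tendsto'
    (f := fun u => (1/K) * Real.exp (-K * Real.exp (-u)))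
    (f' := fun u => Real.exp (-u - K * Real.exp (-u))) (a := t)
    (fun x _ => by
      have := (gmb_hasDerivAt K x).const_mul (1/K)
      convert this using 1
      · rfl
      · rw [← mul_assoc, one_div_mul_cancel hK.ne', one_mul])
    (gmb_integrableOn K hK t)
    (by simpa using ((gmb_tendsto_atBot K hK).const_mul (1/K)))
  simpa using h

lemma gmb_lintegral_Iic (K : ℝ) (hK : 0 < K) (t : ℝ) :
    ∫⁻ u in Iic t, ENNReal.ofReal (Real.exp (-u - K * Real.exp (-u)))
      = ENNReal.ofReal ((1/K) * Real.exp (-K * Real.exp (-t))) := by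
  rw [← ofReal_integral_eq_lintegral_ofReal (gmb_integrableOn K hK t)
    (ae_of_all _ fun u => gmb_nonneg K u), gmb_integral_Iic K hK t]

noncomputable def gumbelMeasure : Measure ℝ :=
  volume.withDensity (fun u => ENNReal.ofReal (Real.exp (-u - Real.exp (-u))))

lemma gumbelMeasure_Iic (t : ℝ) :
    gumbelMeasure (Iic t) = ENNReal.ofReal (Real.exp (-Real.exp (-t))) := by
  rw [gumbelMeasure, withDensity_apply _ measurableSet_Iic]
  have := gmb_lintegral_Iic 1 one_pos t
  simpa using this

lemma gumbelMeasure_Iio (t : ℝ) :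
    gumbelMeasure (Iio t) = ENNReal.ofReal (Real.exp (-Real.exp (-t))) := by
  rw [← gumbelMeasure_Iic t, gumbelMeasure]
  rw [withDensity_apply _ measurableSet_Iio, withDensity_apply _ measurableSet_Iic]
  exact setLIntegral_congr Iio_ae_eq_Iic

lemma law_eq_gumbel {Ω : Type*} [MeasurableSpace Ω] (μ : Measure Ω) [IsProbabilityMeasure μ]
    (f : Ω → ℝ) (hf : Measurable f)
    (hg : ∀ t, μ {ω | f ω ≤ t} = ENNReal.ofReal (Real.exp (-Real.exp (-t)))) :
    μ.map f = gumbelMeasure := by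
  haveI : IsProbabilityMeasure (μ.map f) := Measure.isProbabilityMeasure_map hf.aemeasurable
  refine Measure.ext_of_Iic (μ.map f) gumbelMeasure fun a => ?_
  rw [Measure.map_apply hf measurableSet_Iic, gumbelMeasure_Iic]
  exact hg a

lemma map_eq_pi_gumbel {X Ω : Type*} [Fintype X] [Nonempty X] [MeasurableSpace Ω]
    (μ : Measure Ω) [IsProbabilityMeasure μ] (ε : X → Ω → ℝ) (hmeas : ∀ x, Measurable (ε x))
    (hindep : iIndepFun ε μ)
    (hg : ∀ x t, μ {ω | ε x ω ≤ t} = ENNReal.ofReal (Real.exp (-Real.exp (-t)))) :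
    μ.map (fun ω x => ε x ω) = Measure.pi (fun _ : X => gumbelMeasure) := by
  haveI : IsProbabilityMeasure gumbelMeasure := by
    rw [← law_eq_gumbel μ (ε (Classical.arbitrary X)) (hmeas _) (hg _)]
    exact Measure.isProbabilityMeasure_map (hmeas _).aemeasurable
  refine (Measure.pi_eq fun s hs => ?_).symm
  rw [Measure.map_apply (measurable_pi_lambda _ fun x => hmeas x) (MeasurableSet.univ_pi hs)]
  have hpre : (fun ω x => ε x ω) ⁻¹' (Set.pi univ s) = ⋂ x ∈ Finset.univ, ε x ⁻¹' s x := by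
    ext ω; simp [Set.mem_pi]
  rw [hpre, hindep.measure_inter_preimage_eq_mul Finset.univ (fun i _ => hs i)]
  refine Finset.prod_congr rfl fun x _ => ?_
  rw [← law_eq_gumbel μ (ε x) (hmeas x) (hg x), Measure.map_apply (hmeas x) (hs x)]

lemma lintegral_pi_unique {ι : Type*} [Unique ι] [ft : Fintype ι] (m : Measure ℝ)
    [SigmaFinite m] (F : ℝ → ENNReal) (hF : Measurable F) :
    ∫⁻ a, F (a default) ∂(@Measure.pi ι (fun _ => ℝ) ft (fun _ => inferInstance) (fun _ => m))
      = ∫⁻ v, F v ∂m := by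
  have hft : ft = Unique.fintype := Subsingleton.elim _ _
  subst hft
  exact (measurePreserving_funUnique m ι).lintegral_comp hF

lemma pi_gumbel_key {X : Type*} [Fintype X] [Nonempty X]
    (hP : IsProbabilityMeasure gumbelMeasure) (E : X → ℝ) (xhat : X) (t' : ℝ) :
    Measure.pi (fun _ : X => gumbelMeasure)
      {g : X → ℝ | (∀ y, y ≠ xhat → g y < g xhat + (E y - E xhat)) ∧ g xhat ≤ t'}
      = ENNReal.ofReal ((1 / (∑ x, Real.exp (E xhat - E x))) *
          Real.exp (-(∑ x, Real.exp (E xhat - E x)) * Real.exp (-t'))) := by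
  classical
  set C : ℝ := ∑ x, Real.exp (E xhat - E x) with hC
  set K : ℝ := ∑ y : {y : X // ¬ y = xhat}, Real.exp (E xhat - E y.1) with hK
  have hKC : K + 1 = C := by
    rw [hK, hC]
    rw [← Finset.sum_subtype (Finset.univ.erase xhat)
      (fun y => by simp [Finset.mem_erase]) (fun y => Real.exp (E xhat - E y))]
    have := Finset.sum_erase_add Finset.univ (fun y => Real.exp (E xhat - E y))
      (Finset.mem_univ xhat)
    simpa using this
  have hKnn : 0 ≤ K := Finset.sum_nonneg fun _ _ => (Real.exp_pos _).le
  have hCpos : 0 < C := by rw [← hKC]; linarith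
  set e := MeasurableEquiv.piEquivPiSubtypeProd (fun _ : X => ℝ) (fun y => y = xhat) with he
  have mp := measurePreserving_piEquivPiSubtypeProd (fun _ : X => gumbelMeasure)
    (fun y => y = xhat)
  set xh : {y : X // y = xhat} := ⟨xhat, rfl⟩ with hxh
  set T' : Set (({y : X // y = xhat} → ℝ) × ({y : X // ¬ y = xhat} → ℝ)) :=
    {q | (∀ y : {y : X // ¬ y = xhat}, q.2 y < q.1 xh + (E y.1 - E xhat)) ∧ q.1 xh ≤ t'}
    with hT'
  have hT'm : MeasurableSet T' := by
    have hsplit : T' = (⋂ y : {y : X // ¬ y = xhat},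
        {q : ({y : X // y = xhat} → ℝ) × ({y : X // ¬ y = xhat} → ℝ) |
          q.2 y < q.1 xh + (E y.1 - E xhat)}) ∩ {q | q.1 xh ≤ t'} := by
      ext q; simp [hT']
    rw [hsplit]
    refine MeasurableSet.inter (MeasurableSet.iInter fun y => ?_) ?_
    · exact measurableSet_lt (by fun_prop) (by fun_prop)
    · exact measurableSet_le (by fun_prop) (by fun_prop)
  have hTeq : e ⁻¹' T' =
      {g : X → ℝ | (∀ y, y ≠ xhat → g y < g xhat + (E y - E xhat)) ∧ g xhat ≤ t'} := by
    ext g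
    simp only [he, hT', Set.mem_preimage, Set.mem_setOf_eq,
      MeasurableEquiv.piEquivPiSubtypeProd, Equiv.piEquivPiSubtypeProd,
      MeasurableEquiv.coe_mk, Equiv.coe_fn_mk, Subtype.forall]
    exact Iff.rfl
  have h1 := mp.measure_preimage (s := T') hT'm.nullMeasurableSet
  rw [← hTeq, h1, Measure.prod_apply hT'm]
  set F : ℝ → ENNReal := (Iic t').indicator
      (fun v => ENNReal.ofReal (Real.exp (-K * Real.exp (-v)))) with hF
  have hFm : Measurable F := by
    apply Measurable.indicator _ measurableSet_Iic
    exact (ENNReal.measurable_ofReal.comp (by fun_prop))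
  have hmeasval : ∀ v : ℝ,
      (Measure.pi fun _ : {y : X // ¬ y = xhat} => gumbelMeasure)
        (Set.pi univ fun y => Iio (v + (E y.1 - E xhat)))
      = ENNReal.ofReal (Real.exp (-K * Real.exp (-v))) := by
    intro v
    rw [Measure.pi_pi]
    have hterm : ∀ y : {y : X // ¬ y = xhat},
        gumbelMeasure (Iio (v + (E y.1 - E xhat)))
        = ENNReal.ofReal (Real.exp (-(Real.exp (E xhat - E y.1) * Real.exp (-v)))) := by
      intro y
      rw [gumbelMeasure_Iio]
      congr 2
      rw [← Real.exp_add]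
      ring_nf
    rw [Finset.prod_congr rfl (fun y _ => hterm y),
      ← ENNReal.ofReal_prod_of_nonneg (fun _ _ => (Real.exp_pos _).le)]
    congr 1
    rw [← Real.exp_sum]
    congr 1
    rw [hK, neg_mul, Finset.sum_mul, ← Finset.sum_neg_distrib]
  have hsl : ∀ a : {y : X // y = xhat} → ℝ,
      (Measure.pi fun _ : {y : X // ¬ y = xhat} => gumbelMeasure) (Prod.mk a ⁻¹' T')
        = F (a xh) := by
    intro a
    by_cases h : a xh ≤ t'
    · have : Prod.mk a ⁻¹' T' = Set.pi univ fun y : {y : X // ¬ y = xhat} =>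
          Iio (a xh + (E y.1 - E xhat)) := by
        ext b
        simp [hT', Set.mem_pi, h]
      rw [this, hmeasval, hF, Set.indicator_of_mem (by exact h)]
    · have : Prod.mk a ⁻¹' T' = ∅ := by
        ext b; simp [hT', h]
      rw [this, measure_empty, hF, Set.indicator_of_notMem (by exact h)]
  rw [lintegral_congr hsl]
  refine Eq.trans (lintegral_pi_unique (ft := Subtype.fintype _) gumbelMeasure F hFm) ?_
  rw [hF, lintegral_indicator measurableSet_Iic]
  rw [gumbelMeasure, restrict_withDensity measurableSet_Iic,
    lintegral_withDensity_eq_lintegral_mul _ (by fun_prop) (by fun_prop)]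
  have hpt : ∀ v : ℝ, (ENNReal.ofReal (Real.exp (-v - Real.exp (-v))) *
      ENNReal.ofReal (Real.exp (-K * Real.exp (-v))))
      = ENNReal.ofReal (Real.exp (-v - C * Real.exp (-v))) := by
    intro v
    rw [← ENNReal.ofReal_mul (Real.exp_pos _).le, ← Real.exp_add]
    congr 1
    rw [← hKC]; ring
  calc ∫⁻ v in Iic t', (fun u => ENNReal.ofReal (Real.exp (-u - Real.exp (-u)))) v *
        ENNReal.ofReal (Real.exp (-K * Real.exp (-v)))
      = ∫⁻ v in Iic t', ENNReal.ofReal (Real.exp (-v - C * Real.exp (-v))) := by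
        exact lintegral_congr fun v => hpt v
    _ = ENNReal.ofReal ((1/C) * Real.exp (-C * Real.exp (-t'))) := gmb_lintegral_Iic C hCpos t'

/-- Independence of the max and the argmax under i.i.d. standard Gumbel perturbations:
for every candidate argmax `xhat` and every measurable set `s` of values, the event
that `xhat` is the (unique) maximizer of `-E x + ε x` and the event that the maximal
value lies in `s` are independent. -/
theorem gumbel_max_argmax_independent {X Ω : Type*} [Fintype X] [Nonempty X]
    [MeasurableSpace Ω] (μ : Measure Ω) [IsProbabilityMeasure μ]
    (E : X → ℝ) (ε : X → Ω → ℝ) (hmeas : ∀ x, Measurable (ε x))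
    (hindep : iIndepFun ε μ)
    (hgumbel : ∀ x t, μ {ω | ε x ω ≤ t} = ENNReal.ofReal (Real.exp (-Real.exp (-t)))) :
    ∀ (xhat : X) (s : Set ℝ), MeasurableSet s →
      μ ({ω | ∀ y, y ≠ xhat → -E y + ε y ω < -E xhat + ε xhat ω}
          ∩ {ω | (Finset.univ.sup' Finset.univ_nonempty fun x : X => -E x + ε x ω) ∈ s})
        = μ {ω | ∀ y, y ≠ xhat → -E y + ε y ω < -E xhat + ε xhat ω}
          * μ {ω | (Finset.univ.sup' Finset.univ_nonempty fun x : X => -E x + ε x ω) ∈ s} := by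
  classical
  intro xhat s hs
  haveI hP : IsProbabilityMeasure gumbelMeasure := by
    rw [← law_eq_gumbel μ (ε (Classical.arbitrary X)) (hmeas _) (hgumbel _)]
    exact Measure.isProbabilityMeasure_map (hmeas _).aemeasurable
  set M : Ω → ℝ := fun ω => Finset.univ.sup' Finset.univ_nonempty fun x : X => -E x + ε x ω
    with hM
  have hGmeas : ∀ x : X, Measurable (fun ω => -E x + ε x ω) := fun x =>
    measurable_const.add (hmeas x)
  have hMmeas : Measurable M := by
    have hMe : M = Finset.univ.sup' Finset.univ_nonempty (fun x (ω : Ω) => -E x + ε x ω) := by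
      funext ω; rw [Finset.sup'_apply]
    rw [hMe]
    exact Finset.measurable_sup' Finset.univ_nonempty (fun x _ => hGmeas x)
  set A : Set Ω := {ω | ∀ y, y ≠ xhat → -E y + ε y ω < -E xhat + ε xhat ω} with hA
  set C : ℝ := ∑ x, Real.exp (E xhat - E x) with hC
  have hCpos : 0 < C :=
    Finset.sum_pos (fun x _ => Real.exp_pos _) Finset.univ_nonempty
  have hmap : μ.map (fun ω x => ε x ω) = Measure.pi (fun _ : X => gumbelMeasure) :=
    map_eq_pi_gumbel μ ε hmeas hindep hgumbel
  have hΦmeas : Measurable (fun ω x => ε x ω) := measurable_pi_lambda _ fun x => hmeas x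
  have key1 : ∀ t : ℝ, μ (A ∩ M ⁻¹' Iic t)
      = ENNReal.ofReal ((1/C) * Real.exp (-C * Real.exp (-(t + E xhat)))) := by
    intro t
    have hsetT : A ∩ M ⁻¹' Iic t = (fun ω x => ε x ω) ⁻¹'
        {g : X → ℝ | (∀ y, y ≠ xhat → g y < g xhat + (E y - E xhat)) ∧ g xhat ≤ t + E xhat} := by
      ext ω
      simp only [hA, Set.mem_inter_iff, Set.mem_setOf_eq, Set.mem_preimage, Set.mem_Iic, hM]
      constructor
      · rintro ⟨h1, h2⟩
        rw [Finset.sup'_le_iff] at h2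
        refine ⟨fun y hy => by have := h1 y hy; linarith, ?_⟩
        have := h2 xhat (Finset.mem_univ xhat)
        linarith
      · rintro ⟨h1, h2⟩
        have hA' : ∀ y, y ≠ xhat → -E y + ε y ω < -E xhat + ε xhat ω := fun y hy => by
          have := h1 y hy; linarith
        refine ⟨hA', ?_⟩
        rw [Finset.sup'_le_iff]
        intro x _
        by_cases hx : x = xhat
        · subst hx; linarith
        · have := hA' x hx; linarith
    have hTm : MeasurableSet {g : X → ℝ |
        (∀ y, y ≠ xhat → g y < g xhat + (E y - E xhat)) ∧ g xhat ≤ t + E xhat} := by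
      have hsp : {g : X → ℝ | (∀ y, y ≠ xhat → g y < g xhat + (E y - E xhat))
            ∧ g xhat ≤ t + E xhat}
          = (⋂ y, ⋂ _ : y ≠ xhat, {g : X → ℝ | g y < g xhat + (E y - E xhat)})
            ∩ {g : X → ℝ | g xhat ≤ t + E xhat} := by
        ext g; simp
      rw [hsp]
      exact (MeasurableSet.iInter fun y => MeasurableSet.iInter fun _ =>
        measurableSet_lt (measurable_pi_apply y)
          ((measurable_pi_apply xhat).add_const _)).inter
        (measurableSet_le (measurable_pi_apply xhat) measurable_const)
    rw [hsetT, ← Measure.map_apply hΦmeas hTm, hmap, pi_gumbel_key hP E xhat (t + E xhat)]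
  have key2 : ∀ t : ℝ, μ (M ⁻¹' Iic t)
      = ENNReal.ofReal (Real.exp (-C * Real.exp (-(t + E xhat)))) := by
    intro t
    have hsetT : M ⁻¹' Iic t = (fun ω x => ε x ω) ⁻¹'
        (Set.pi univ fun x : X => Iic (t + E x)) := by
      ext ω
      simp only [Set.mem_preimage, Set.mem_Iic, hM, Set.mem_pi, Set.mem_univ,
        forall_true_left, Finset.sup'_le_iff]
      constructor
      · intro h x
        have := h x (Finset.mem_univ x); linarith
      · intro h x _
        have := h x; linarith
    rw [hsetT, ← Measure.map_apply hΦmeas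
      (MeasurableSet.univ_pi fun x => measurableSet_Iic), hmap, Measure.pi_pi]
    have hterm : ∀ x : X, gumbelMeasure (Iic (t + E x))
        = ENNReal.ofReal (Real.exp (-(Real.exp (E xhat - E x)
            * Real.exp (-(t + E xhat))))) := by
      intro x
      rw [gumbelMeasure_Iic]
      congr 2
      rw [← Real.exp_add]; ring_nf
    rw [Finset.prod_congr rfl fun x _ => hterm x,
      ← ENNReal.ofReal_prod_of_nonneg (fun _ _ => (Real.exp_pos _).le)]
    congr 1
    rw [← Real.exp_sum]
    congr 1
    rw [hC, neg_mul, Finset.sum_mul, ← Finset.sum_neg_distrib]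
  have keyA : μ A = ENNReal.ofReal (1/C) := by
    have hmono : Monotone (fun n : ℕ => A ∩ M ⁻¹' Iic (n : ℝ)) := fun m n hmn =>
      Set.inter_subset_inter_right _ (Set.preimage_mono (Iic_subset_Iic.mpr
        (by exact_mod_cast hmn)))
    have hunion : ⋃ n : ℕ, (A ∩ M ⁻¹' Iic (n : ℝ)) = A := by
      ext ω
      simp only [Set.mem_iUnion, Set.mem_inter_iff, Set.mem_preimage, Set.mem_Iic]
      constructor
      · rintro ⟨n, h, _⟩; exact h
      · intro h
        obtain ⟨n, hn⟩ := exists_nat_ge (M ω)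
        exact ⟨n, h, hn⟩
    have ht := tendsto_measure_iUnion_atTop (μ := μ) hmono
    rw [hunion] at ht
    have l1 : Tendsto (fun n : ℕ => -((n:ℝ) + E xhat)) atTop atBot :=
      tendsto_neg_atTop_atBot.comp (tendsto_atTop_add_const_right _ _
        tendsto_natCast_atTop_atTop)
    have l2 : Tendsto (fun n : ℕ => Real.exp (-((n:ℝ) + E xhat))) atTop (nhds 0) :=
      Real.tendsto_exp_atBot.comp l1
    have l3 : Tendsto (fun n : ℕ => -C * Real.exp (-((n:ℝ) + E xhat))) atTop (nhds 0) := by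
      simpa using l2.const_mul (-C)
    have l4 : Tendsto (fun n : ℕ => Real.exp (-C * Real.exp (-((n:ℝ) + E xhat)))) atTop
        (nhds 1) := by
      simpa [Function.comp_def] using (Real.continuous_exp.tendsto 0).comp l3
    have l5 : Tendsto (fun n : ℕ => (1/C) * Real.exp (-C * Real.exp (-((n:ℝ) + E xhat))))
        atTop (nhds (1/C)) := by
      simpa using l4.const_mul (1/C)
    have ht2 : Tendsto (fun n : ℕ => μ (A ∩ M ⁻¹' Iic (n : ℝ))) atTop
        (nhds (ENNReal.ofReal (1/C))) := by
      simp only [key1]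
      exact (ENNReal.continuous_ofReal.tendsto _).comp l5
    exact tendsto_nhds_unique ht ht2
  have heq : (μ.restrict A).map M = (ENNReal.ofReal (1/C)) • (μ.map M) := by
    haveI : IsFiniteMeasure ((μ.restrict A).map M) := by
      constructor
      rw [Measure.map_apply hMmeas MeasurableSet.univ, Set.preimage_univ]
      exact measure_lt_top _ _
    refine Measure.ext_of_Iic _ _ fun a => ?_
    rw [Measure.map_apply hMmeas measurableSet_Iic,
      Measure.restrict_apply (hMmeas measurableSet_Iic), Set.inter_comm, key1 a,
      Measure.smul_apply, Measure.map_apply hMmeas measurableSet_Iic, key2 a, smul_eq_mul,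
      ← ENNReal.ofReal_mul (by positivity)]
  have happ : ((μ.restrict A).map M) s = ((ENNReal.ofReal (1/C)) • (μ.map M)) s := by
    rw [heq]
  rw [Measure.map_apply hMmeas hs, Measure.restrict_apply (hMmeas hs), Measure.smul_apply,
    Measure.map_apply hMmeas hs, smul_eq_mul] at happ
  show μ (A ∩ M ⁻¹' s) = μ A * μ (M ⁻¹' s)
  calc μ (A ∩ M ⁻¹' s) = μ (M ⁻¹' s ∩ A) := by rw [Set.inter_comm]
    _ = ENNReal.ofReal (1/C) * μ (M ⁻¹' s) := happ
    _ = μ A * μ (M ⁻¹' s) := by rw [keyA]
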